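/- arXiv:1608.06872 — 2 statements merged into one kernel-verified Lean document; each statement's English description precedes it below -/
import Mathlib

section
/- The map Z⁻¹ is a left inverse of the Weil–Gel'fand–Zak transform: for every f = (f_γ)_{γ∈𝒵} in S(E)⊗ℂ^𝒵, every θ ∈ E, and every γ ∈ Λ*, one has Z⁻¹(Z(f))(θ,γ) = f_γ(θ). -/
open MeasureTheory Complex
open scoped Real RealInnerProductSpace BigOperators ENNReal NNReal
set_option maxHeartbeats 1000000

noncomputable section

/-- `ℝⁿ` as a Euclidean space. -/
abbrev EN (n : ℕ) := EuclideanSpace ℝ (Fin n)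

/-- The Weil–Gel'fand–Zak transform. -/
def WGZ {n : ℕ} (Λd : AddSubgroup (EN n)) (R : Finset (EN n))
    (f : EN n → EN n → ℂ) (θ₁ θ₂ : EN n) : ℂ :=
  (Real.sqrt R.card)⁻¹ * Complex.exp (-(π : ℂ) * I * (⟪θ₁, θ₂⟫ : ℂ)) *
    ∑ γ ∈ R, ∑' l : Λd, f γ (θ₁ + (l : EN n)) *
      Complex.exp (-2 * (π : ℂ) * I * (⟪(l : EN n), θ₂⟫ : ℂ)) *
      Complex.exp (-2 * (π : ℂ) * I * (⟪(l : EN n), γ⟫ : ℂ))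

/-- The inverse Weil–Gel'fand–Zak transform. -/
def WGZinv {n : ℕ} (R : Finset (EN n)) (F : Set (EN n))
    (s : EN n → EN n → ℂ) (θ γ : EN n) : ℂ :=
  (Real.sqrt R.card)⁻¹ * ∑ γh ∈ R, Complex.exp (2 * (π : ℂ) * I * (⟪γ, γh⟫ : ℂ)) *
    (((volume F).toReal)⁻¹ *
      ∫ θt in F, s (θ - γh) θt * Complex.exp ((π : ℂ) * I * (⟪θ + γh, θt⟫ : ℂ)))

lemma wgzaux_summable_int : Summable (fun k : ℤ => ((1 + |(k : ℝ)|) ^ 2)⁻¹) := by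
  have h0 : Summable (fun n : ℕ => ((n : ℝ) ^ 2)⁻¹) := by
    simpa using Real.summable_one_div_nat_pow.mpr one_lt_two
  have h : Summable (fun n : ℕ => ((1 + |(n : ℝ)|) ^ 2)⁻¹) := by
    have := (summable_nat_add_iff 1).mpr h0
    apply this.congr
    intro n
    congr 1
    push_cast
    rw [_root_.abs_of_nonneg (n.cast_nonneg : (0:ℝ) ≤ n)]
    ring
  apply Summable.of_nat_of_neg h
  apply h.congr
  intro n
  simp

lemma wgzaux_summable_pi (n : ℕ) :
    Summable (fun m : Fin n → ℤ => ∏ i, ((1 + |(m i : ℝ)|) ^ 2)⁻¹) := by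
  induction n with
  | zero => exact Summable.of_finite
  | succ n ih =>
    have h := wgzaux_summable_int.mul_of_nonneg ih (fun _ => by positivity)
      (fun _ => Finset.prod_nonneg fun _ _ => by positivity)
    rw [← (Fin.consEquiv fun _ => ℤ).symm.summable_iff] at h
    apply h.congr
    intro m
    rw [Fin.prod_univ_succ]
    rfl


def wgzDual {n : ℕ} (bE : Module.Basis (Fin n) ℝ (EN n)) : Module.Basis (Fin n) ℝ (EN n) :=
  bE.dualBasis.map (LinearMap.toContinuousLinearMap.trans
    (InnerProductSpace.toDual ℝ (EN n)).symm.toLinearEquiv)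

lemma inner_wgzDual {n : ℕ} (bE : Module.Basis (Fin n) ℝ (EN n)) (i : Fin n) (x : EN n) :
    ⟪wgzDual bE i, x⟫ = bE.repr x i := by
  simp only [wgzDual, Module.Basis.map_apply, LinearEquiv.trans_apply,
    LinearIsometryEquiv.coe_toLinearEquiv, InnerProductSpace.toDual_symm_apply]
  simp [Module.Basis.dualBasis_apply]

lemma inner_basis_wgzDual {n : ℕ} (bE : Module.Basis (Fin n) ℝ (EN n)) (i j : Fin n) :
    ⟪bE i, wgzDual bE j⟫ = if i = j then 1 else 0 := by
  rw [real_inner_comm, inner_wgzDual, Module.Basis.repr_self, Finsupp.single_apply]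

lemma inner_basis_sum_wgzDual {n : ℕ} (bE : Module.Basis (Fin n) ℝ (EN n)) (c : Fin n → ℝ) (j : Fin n) :
    ⟪bE j, ∑ i, c i • wgzDual bE i⟫ = c j := by
  rw [inner_sum]
  simp_rw [real_inner_smul_right, inner_basis_wgzDual]
  simp

lemma wgz_repr_eq_inner {n : ℕ} (bE : Module.Basis (Fin n) ℝ (EN n)) (x : EN n) (j : Fin n) :
    (wgzDual bE).repr x j = ⟪bE j, x⟫ := by
  conv_rhs => rw [← (wgzDual bE).sum_repr x]
  rw [inner_basis_sum_wgzDual]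

lemma wgz_inj {n : ℕ} (bE : Module.Basis (Fin n) ℝ (EN n)) :
    Function.Injective (fun m : Fin n → ℤ => ∑ i, (m i : ℝ) • wgzDual bE i) := by
  intro m m' h
  funext j
  have h2 := congrArg (fun x => ⟪bE j, x⟫) h
  simp only [inner_basis_sum_wgzDual] at h2
  exact_mod_cast h2

lemma wgz_equiv_bij {n : ℕ} (bE : Module.Basis (Fin n) ℝ (EN n)) (Λd : AddSubgroup (EN n))
    (h : ∀ γ, γ ∈ Λd ↔ ∃ m : Fin n → ℤ, γ = ∑ i, (m i : ℝ) • wgzDual bE i) :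
    Function.Bijective (fun m : Fin n → ℤ =>
      (⟨∑ i, (m i : ℝ) • wgzDual bE i, (h _).mpr ⟨m, rfl⟩⟩ : Λd)) := by
  constructor
  · intro m m' hmm
    exact wgz_inj bE (by simpa [Subtype.ext_iff] using hmm)
  · rintro ⟨x, hx⟩
    obtain ⟨m, rfl⟩ := (h x).mp hx
    exact ⟨m, rfl⟩

lemma wgz_summable {n : ℕ} (bE : Module.Basis (Fin n) ℝ (EN n)) (Λd : AddSubgroup (EN n))
    (h : ∀ γ, γ ∈ Λd ↔ ∃ m : Fin n → ℤ, γ = ∑ i, (m i : ℝ) • wgzDual bE i)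
    (g : SchwartzMap (EN n) ℂ) (x0 : EN n) :
    Summable (fun l : Λd => ‖g (x0 + (l : EN n))‖) := by
  let e : (Fin n → ℤ) ≃ Λd := Equiv.ofBijective _ (wgz_equiv_bij bE Λd h)
  rw [← e.summable_iff]
  obtain ⟨C, hC0, hC⟩ : ∃ C : ℝ, 0 ≤ C ∧ ∀ x : EN n, (1 + ‖x‖) ^ (2 * n) * ‖g x‖ ≤ C := by
    refine ⟨2 ^ (2*n) * (Finset.Iic ((2*n : ℕ), (0:ℕ))).sup
      (fun m => SchwartzMap.seminorm ℝ m.1 m.2) g, by positivity, fun x => ?_⟩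
    have := SchwartzMap.one_add_le_sup_seminorm_apply (𝕜 := ℝ) (m := (2*n, 0))
      le_rfl le_rfl g x
    simpa [norm_iteratedFDeriv_zero] using this
  set K : ℝ := ∏ j : Fin n, (1 + ‖bE j‖ * (1 + ‖x0‖)) ^ 2 with hKdef
  have hK0 : 0 ≤ K := Finset.prod_nonneg fun j _ => by positivity
  refine Summable.of_nonneg_of_le (fun m => norm_nonneg _) ?_
    ((wgzaux_summable_pi n).mul_left (C * K))
  intro m
  set x : EN n := x0 + ∑ i, (m i : ℝ) • wgzDual bE i with hxdef
  have hcoord : ∀ j, (m j : ℝ) = ⟪bE j, x - x0⟫ := by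
    intro j
    rw [hxdef, add_sub_cancel_left, inner_basis_sum_wgzDual]
  have hmj : ∀ j, (1 + |(m j : ℝ)|) ≤ (1 + ‖bE j‖ * (1 + ‖x0‖)) * (1 + ‖x‖) := by
    intro j
    have h1 : |(m j : ℝ)| ≤ ‖bE j‖ * ‖x - x0‖ := by
      rw [hcoord j]; exact abs_real_inner_le_norm _ _
    have h2 : ‖x - x0‖ ≤ ‖x‖ + ‖x0‖ := norm_sub_le _ _
    have h3 : (0:ℝ) ≤ ‖bE j‖ := norm_nonneg _
    have h4 : (0:ℝ) ≤ ‖x‖ := norm_nonneg _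
    have h5 : (0:ℝ) ≤ ‖x0‖ := norm_nonneg _
    nlinarith [mul_le_mul_of_nonneg_left h2 h3, mul_nonneg (mul_nonneg h3 h4) h5,
      mul_nonneg h3 h5, mul_nonneg h3 h4]
  have hprod : (∏ j, (1 + |(m j : ℝ)|) ^ 2) ≤ K * (1 + ‖x‖) ^ (2 * n) := by
    have h1 : (∏ j, (1 + |(m j : ℝ)|) ^ 2) ≤
        ∏ j : Fin n, ((1 + ‖bE j‖ * (1 + ‖x0‖)) * (1 + ‖x‖)) ^ 2 := by
      apply Finset.prod_le_prod (fun j _ => by positivity)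
      intro j _
      have := hmj j
      have h0 : (0:ℝ) ≤ 1 + |(m j : ℝ)| := by positivity
      nlinarith
    calc (∏ j, (1 + |(m j : ℝ)|) ^ 2) ≤ _ := h1
      _ = K * (1 + ‖x‖) ^ (2 * n) := by
          simp_rw [mul_pow, Finset.prod_mul_distrib, hKdef]
          rw [Finset.prod_const, ← pow_mul, Finset.card_univ, Fintype.card_fin]
  have hprodpos : (0:ℝ) < ∏ j, (1 + |(m j : ℝ)|) ^ 2 :=
    Finset.prod_pos fun j _ => by positivity
  have key : ‖g x‖ * (∏ j, (1 + |(m j : ℝ)|) ^ 2) ≤ C * K := by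
    calc ‖g x‖ * (∏ j, (1 + |(m j : ℝ)|) ^ 2)
        ≤ ‖g x‖ * (K * (1 + ‖x‖) ^ (2 * n)) :=
          mul_le_mul_of_nonneg_left hprod (norm_nonneg _)
      _ = K * ((1 + ‖x‖) ^ (2 * n) * ‖g x‖) := by ring
      _ ≤ K * C := mul_le_mul_of_nonneg_left (hC x) hK0
      _ = C * K := mul_comm _ _
  have : ‖g x‖ ≤ (C * K) * (∏ j, (1 + |(m j : ℝ)|) ^ 2)⁻¹ := by
    rw [← le_div_iff₀ hprodpos] at key
    simpa [div_eq_mul_inv] using key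
  calc ‖g ((x0 : EN n) + ((e m : Λd) : EN n))‖ = ‖g x‖ := rfl
    _ ≤ (C * K) * (∏ j, (1 + |(m j : ℝ)|) ^ 2)⁻¹ := this
    _ = (C * K) * ∏ i, ((1 + |(m i : ℝ)|) ^ 2)⁻¹ := by
        rw [← Finset.prod_inv_distrib]

lemma wgz_fd {n : ℕ} (Λ : AddSubgroup (EN n)) (F : Set (EN n))
    (hFmeas : NullMeasurableSet F volume)
    (hF : ∀ x : EN n, ∃! l, l ∈ Λ ∧ x + l ∈ F) :
    IsAddFundamentalDomain Λ F volume := by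
  apply IsAddFundamentalDomain.mk' hFmeas
  intro x
  obtain ⟨l, ⟨hl, hlF⟩, huniq⟩ := hF x
  refine ⟨⟨l, hl⟩, by { show l + x ∈ F; rw [add_comm]; exact hlF }, ?_⟩
  intro g hg
  have hg' : x + (g : EN n) ∈ F := by rw [add_comm]; exact hg
  exact Subtype.ext (huniq g ⟨g.2, hg'⟩)

lemma wgz_exp_int (m : ℤ) : Complex.exp (2 * (π:ℂ) * I * (m:ℂ)) = 1 := by
  rw [show 2 * (π:ℂ) * I * (m:ℂ) = (m:ℂ) * (2 * π * I) by ring]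
  exact Complex.exp_int_mul_two_pi_mul_I m

lemma wgz_integral_char {n : ℕ} (Λ : AddSubgroup (EN n)) (F : Set (EN n))
    (hFmeas : MeasurableSet F)
    (hF : ∀ x : EN n, ∃! l, l ∈ Λ ∧ x + l ∈ F)
    (hcnt : Countable Λ) (μ : EN n) (hμper : ∀ l ∈ Λ, ∃ m : ℤ, ⟪μ, l⟫ = (m:ℝ)) (hμ0 : μ ≠ 0) :
    (∫ θt in F, Complex.exp (2 * (π:ℂ) * I * ((⟪μ, θt⟫ : ℝ) : ℂ))) = 0 := by
  haveI := hcnt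
  set χ : EN n → ℂ := fun x => Complex.exp (2 * (π:ℂ) * I * ((⟪μ, x⟫ : ℝ) : ℂ)) with hχ
  have hχadd : ∀ x y : EN n, χ (x + y) = χ x * χ y := by
    intro x y
    rw [hχ]
    simp only
    rw [← Complex.exp_add, inner_add_right]
    push_cast
    ring_nf
  have hχΛ : ∀ l ∈ Λ, χ l = 1 := by
    intro l hl
    obtain ⟨m, hm⟩ := hμper l hl
    rw [hχ]
    simp only [hm]
    exact wgz_exp_int m
  have hinv : ∀ (g : Λ) (x : EN n), χ ((g : EN n) + x) = χ x := by
    intro g x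
    rw [hχadd, hχΛ g g.2, one_mul]
  -- translation vector
  set a : EN n := ((2:ℝ) * ‖μ‖^2)⁻¹ • μ with ha
  have hμa : ⟪μ, a⟫ = (1/2 : ℝ) := by
    rw [ha, real_inner_smul_right, real_inner_self_eq_norm_sq]
    have : ‖μ‖ ≠ 0 := norm_ne_zero_iff.mpr hμ0
    field_simp
  have hχa : χ a = -1 := by
    rw [hχ]
    simp only [hμa]
    push_cast
    rw [show 2 * (π:ℂ) * I * (1/2 : ℂ) = π * I by ring]
    exact Complex.exp_pi_mul_I
  -- translated fundamental domain
  set Fa : Set (EN n) := (fun x => x + a) '' F with hFa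
  have hmemFa : ∀ y : EN n, y ∈ Fa ↔ y - a ∈ F := by
    intro y
    constructor
    · rintro ⟨z, hz, rfl⟩; simpa using hz
    · intro hy; exact ⟨y - a, hy, by simp⟩
  have hFDF : IsAddFundamentalDomain Λ F volume :=
    wgz_fd Λ F hFmeas.nullMeasurableSet hF
  have hFameas : MeasurableSet Fa := by
    have : Fa = (fun y => y - a) ⁻¹' F := by
      ext y; simp [hmemFa y]
    rw [this]
    exact hFmeas.preimage (measurable_id.sub_const a)
  have hFDFa : IsAddFundamentalDomain Λ Fa volume := by
    apply wgz_fd Λ Fa hFameas.nullMeasurableSet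
    intro x
    obtain ⟨l, ⟨hl, hlF⟩, huniq⟩ := hF (x - a)
    have e1 : ∀ l : EN n, x + l - a = x - a + l := by intro l; abel
    refine ⟨l, ⟨hl, ?_⟩, ?_⟩
    · rw [hmemFa, e1]; exact hlF
    · rintro l' ⟨hl', hl'F⟩
      rw [hmemFa, e1] at hl'F
      exact huniq l' ⟨hl', hl'F⟩
  have h1 : (∫ θt in F, χ θt) = ∫ θt in Fa, χ θt :=
    hFDF.setIntegral_eq hFDFa hinv
  have h2 : (∫ θt in Fa, χ θt) = ∫ θt in F, χ (θt + a) := by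
    rw [hFa]
    exact (measurePreserving_add_right volume a).setIntegral_image_emb
      (measurableEmbedding_addRight a) χ F
  have h3 : (∫ θt in F, χ (θt + a)) = -∫ θt in F, χ θt := by
    rw [← integral_neg]
    congr 1
    funext θt
    rw [hχadd, hχa]
    ring
  have h4 := h1.trans (h2.trans h3)
  linear_combination (1/2 : ℂ) * h4

lemma wgz_char_sum {n : ℕ} (Λ Λd : AddSubgroup (EN n)) (R : Finset (EN n))
    (hR : ∀ r ∈ R, r ∈ Λd)
    (hRrep : ∀ γ ∈ Λd, ∃! r, r ∈ R ∧ γ - r ∈ Λ)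
    (μ : EN n) (hμint : ∀ l ∈ Λ, ∃ m : ℤ, ⟪μ, l⟫ = (m:ℝ))
    (ν : EN n) (hνd : ν ∈ Λd) (hνni : ¬∃ m : ℤ, ⟪μ, ν⟫ = (m:ℝ)) :
    ∑ r ∈ R, Complex.exp (2 * (π:ℂ) * I * ((⟪μ, r⟫ : ℝ) : ℂ)) = 0 := by
  classical
  set χ : EN n → ℂ := fun x => Complex.exp (2 * (π:ℂ) * I * ((⟪μ, x⟫ : ℝ) : ℂ)) with hχ
  have hχadd : ∀ x y : EN n, χ (x + y) = χ x * χ y := by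
    intro x y
    simp only [hχ]
    rw [← Complex.exp_add, inner_add_right]
    push_cast
    ring_nf
  have hχΛ : ∀ l ∈ Λ, χ l = 1 := by
    intro l hl
    obtain ⟨m, hm⟩ := hμint l hl
    simp only [hχ, hm]
    exact wgz_exp_int m
  -- the shift maps
  have hmem : ∀ r ∈ R, r + ν ∈ Λd := fun r hr => add_mem (hR r hr) hνd
  have hmem' : ∀ s ∈ R, s - ν ∈ Λd := fun s hs => sub_mem (hR s hs) hνd
  set σ : EN n → EN n := fun r => if h : r + ν ∈ Λd then (hRrep _ h).choose else 0 with hσ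
  set τ : EN n → EN n := fun s => if h : s - ν ∈ Λd then (hRrep _ h).choose else 0 with hτ
  have hσspec : ∀ r ∈ R, σ r ∈ R ∧ (r + ν) - σ r ∈ Λ ∧
      (∀ y, y ∈ R ∧ (r + ν) - y ∈ Λ → y = σ r) := by
    intro r hr
    have h := hmem r hr
    have hs := (hRrep _ h).choose_spec
    simp only [hσ, dif_pos h]
    exact ⟨hs.1.1, hs.1.2, hs.2⟩
  have hτspec : ∀ s ∈ R, τ s ∈ R ∧ (s - ν) - τ s ∈ Λ ∧
      (∀ y, y ∈ R ∧ (s - ν) - y ∈ Λ → y = τ s) := by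
    intro s hs
    have h := hmem' s hs
    have hs' := (hRrep _ h).choose_spec
    simp only [hτ, dif_pos h]
    exact ⟨hs'.1.1, hs'.1.2, hs'.2⟩
  have key : ∑ r ∈ R, χ r * χ ν = ∑ r ∈ R, χ r := by
    rw [show (∑ r ∈ R, χ r) = ∑ r ∈ R, χ (σ r) from ?_, ]
    · apply Finset.sum_congr rfl
      intro r hr
      obtain ⟨hσR, hσΛ, _⟩ := hσspec r hr
      have : χ (σ r) = χ (r + ν) * χ (-(r + ν - σ r)) := by
        rw [← hχadd]
        congr 1
        abel
      rw [this, hχΛ _ (neg_mem hσΛ), mul_one, hχadd]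
    · -- reindex
      refine (Finset.sum_nbij' σ τ ?_ ?_ ?_ ?_ ?_).symm
      · intro r hr; exact (hσspec r hr).1
      · intro s hs; exact (hτspec s hs).1
      · intro r hr
        obtain ⟨hσR, hσΛ, _⟩ := hσspec r hr
        obtain ⟨_, _, huniq⟩ := hτspec (σ r) hσR
        refine (huniq r ⟨hr, ?_⟩).symm
        · have : σ r - ν - r = -((r + ν) - σ r) := by abel
          rw [this]; exact neg_mem hσΛ
      · intro s hs
        obtain ⟨hτR, hτΛ, _⟩ := hτspec s hs
        obtain ⟨_, _, huniq⟩ := hσspec (τ s) hτR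
        refine (huniq s ⟨hs, ?_⟩).symm
        · have : τ s + ν - s = -((s - ν) - τ s) := by abel
          rw [this]; exact neg_mem hτΛ
      · intro r hr; rfl
  have hχν : χ ν ≠ 1 := by
    intro hc
    apply hνni
    rw [hχ] at hc
    simp only at hc
    rw [Complex.exp_eq_one_iff] at hc
    obtain ⟨m, hm⟩ := hc
    refine ⟨m, ?_⟩
    have h2 : ((⟪μ, ν⟫ : ℝ) : ℂ) = (m : ℂ) := by
      have hne : (2 * (π:ℂ) * I) ≠ 0 := by
        simp [Real.pi_ne_zero, Complex.I_ne_zero]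
      apply mul_left_cancel₀ hne
      linear_combination hm
    exact_mod_cast h2
  have : (χ ν - 1) * ∑ r ∈ R, χ r = 0 := by
    rw [sub_mul, one_mul, sub_eq_zero, Finset.mul_sum]
    simpa [mul_comm] using key
  rcases mul_eq_zero.mp this with h | h
  · exact absurd (sub_eq_zero.mp h) hχν
  · exact h

section Char
variable {n : ℕ} (Λ Λd : AddSubgroup (EN n)) (bE : Module.Basis (Fin n) ℝ (EN n))

lemma wgz_basis_mem (hΛ : ∀ x, x ∈ Λ ↔ ∃ c : Fin n → ℤ, x = ∑ i, (c i : ℝ) • bE i)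
    (j : Fin n) : bE j ∈ Λ := by
  rw [hΛ]
  refine ⟨fun k => if k = j then 1 else 0, ?_⟩
  rw [Finset.sum_eq_single j]
  · simp
  · intro k _ hk; simp [hk]
  · intro h; exact absurd (Finset.mem_univ j) h

lemma wgz_mem_dual_iff
    (hΛ : ∀ x, x ∈ Λ ↔ ∃ c : Fin n → ℤ, x = ∑ i, (c i : ℝ) • bE i)
    (hΛd : ∀ γ, γ ∈ Λd ↔ ∀ l ∈ Λ, ∃ m : ℤ, ⟪l, γ⟫ = (m : ℝ)) (γ : EN n) :
    γ ∈ Λd ↔ ∃ m : Fin n → ℤ, γ = ∑ i, (m i : ℝ) • wgzDual bE i := by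
  constructor
  · intro hγ
    have h1 : ∀ j, ∃ m : ℤ, ⟪bE j, γ⟫ = (m : ℝ) := fun j =>
      (hΛd γ).mp hγ (bE j) (wgz_basis_mem Λ bE hΛ j)
    choose m hm using h1
    refine ⟨m, ?_⟩
    have h2 : ∀ j, (wgzDual bE).repr γ j = ((m j : ℝ)) := by
      intro j; rw [wgz_repr_eq_inner, hm j]
    conv_lhs => rw [← (wgzDual bE).sum_repr γ]
    apply Finset.sum_congr rfl
    intro j _
    rw [h2 j]
  · rintro ⟨m, rfl⟩
    rw [hΛd]
    intro l hl
    obtain ⟨c, rfl⟩ := (hΛ l).mp hl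
    refine ⟨∑ i, c i * m i, ?_⟩
    rw [inner_sum]
    push_cast
    apply Finset.sum_congr rfl
    intro i _
    rw [real_inner_smul_right, sum_inner]
    simp_rw [real_inner_smul_left, inner_basis_wgzDual]
    simp
    ring
end Char

section Nu
variable {n : ℕ} (Λ Λd : AddSubgroup (EN n)) (bE : Module.Basis (Fin n) ℝ (EN n))

lemma wgz_exists_nu
    (hΛ : ∀ x, x ∈ Λ ↔ ∃ c : Fin n → ℤ, x = ∑ i, (c i : ℝ) • bE i)
    (hΛd : ∀ γ, γ ∈ Λd ↔ ∀ l ∈ Λ, ∃ m : ℤ, ⟪l, γ⟫ = (m : ℝ))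
    (μ : EN n) (hμΛ : μ ∉ Λ) :
    ∃ ν, ν ∈ Λd ∧ ¬∃ m : ℤ, ⟪μ, ν⟫ = (m : ℝ) := by
  by_contra hcon
  push_neg at hcon
  apply hμΛ
  have hdual : ∀ j, wgzDual bE j ∈ Λd := by
    intro j
    rw [wgz_mem_dual_iff Λ Λd bE hΛ hΛd]
    refine ⟨fun k => if k = j then 1 else 0, ?_⟩
    rw [Finset.sum_eq_single j]
    · simp
    · intro k _ hk; simp [hk]
    · intro h; exact absurd (Finset.mem_univ j) h
  have h1 : ∀ j, ∃ m : ℤ, ⟪μ, wgzDual bE j⟫ = (m : ℝ) := fun j =>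
    hcon (wgzDual bE j) (hdual j)
  choose m hm using h1
  rw [hΛ]
  refine ⟨m, ?_⟩
  have h2 : ∀ j, bE.repr μ j = ((m j : ℝ)) := by
    intro j
    rw [← inner_wgzDual bE j μ, real_inner_comm]
    exact hm j
  conv_lhs => rw [← bE.sum_repr μ]
  apply Finset.sum_congr rfl
  intro j _
  rw [h2 j]

lemma wgz_countable
    (hΛ : ∀ x, x ∈ Λ ↔ ∃ c : Fin n → ℤ, x = ∑ i, (c i : ℝ) • bE i) :
    Countable Λ := by
  have hex : ∀ l : Λ, ∃ c : Fin n → ℤ, (l : EN n) = ∑ i, (c i : ℝ) • bE i :=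
    fun l => (hΛ l).mp l.2
  choose c hc using hex
  have hinj : Function.Injective c := by
    intro l l' h
    apply Subtype.ext
    rw [hc l, hc l', h]
  exact hinj.countable

lemma wgz_volume_facts (F : Set (EN n)) (hFmeas : MeasurableSet F)
    (hF : ∀ x : EN n, ∃! l, l ∈ Λ ∧ x + l ∈ F)
    (hΛ : ∀ x, x ∈ Λ ↔ ∃ c : Fin n → ℤ, x = ∑ i, (c i : ℝ) • bE i) :
    volume F ≠ 0 ∧ volume F ≠ ⊤ := by
  haveI := wgz_countable Λ bE hΛ
  have heq : (Submodule.span ℤ (Set.range ⇑bE)).toAddSubgroup = Λ := by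
    ext x
    rw [Submodule.mem_toAddSubgroup, Submodule.mem_span_range_iff_exists_fun, hΛ]
    constructor
    · rintro ⟨c, rfl⟩
      exact ⟨c, by simp_rw [← Int.cast_smul_eq_zsmul ℝ]⟩
    · rintro ⟨c, rfl⟩
      exact ⟨c, by simp_rw [← Int.cast_smul_eq_zsmul ℝ]⟩
  have hFDF : IsAddFundamentalDomain Λ F volume :=
    wgz_fd Λ F hFmeas.nullMeasurableSet hF
  have hZ := ZSpan.isAddFundamentalDomain' bE volume
  rw [heq] at hZ
  have hveq : volume F = volume (ZSpan.fundamentalDomain bE) := hFDF.measure_eq hZ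
  constructor
  · rw [hveq]; exact ZSpan.measure_fundamentalDomain_ne_zero bE
  · rw [hveq]; exact ((ZSpan.fundamentalDomain_isBounded bE).measure_lt_top).ne
end Nu

lemma wgz_norm_exp_I (z : ℂ) (hz : z.re = 0) : ‖Complex.exp z‖ = 1 := by
  rw [Complex.norm_exp, hz, Real.exp_zero]


section Main
variable {n : ℕ} (Λ Λd : AddSubgroup (EN n)) (bE : Module.Basis (Fin n) ℝ (EN n))
  (R : Finset (EN n)) (F : Set (EN n))

lemma wgz_inner_integral
    (hΛ : ∀ x, x ∈ Λ ↔ ∃ c : Fin n → ℤ, x = ∑ i, (c i : ℝ) • bE i)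
    (hΛd : ∀ γ, γ ∈ Λd ↔ ∀ l ∈ Λ, ∃ m : ℤ, ⟪l, γ⟫ = (m : ℝ))
    (hFmeas : MeasurableSet F)
    (hF : ∀ x : EN n, ∃! l, l ∈ Λ ∧ x + l ∈ F)
    (hvol : volume F ≠ ⊤)
    (f : EN n → SchwartzMap (EN n) ℂ) (θ γh : EN n) (hγh : γh ∈ Λd) :
    (∫ θt in F, WGZ Λd R (fun γ' => ⇑(f γ')) (θ - γh) θt *
        Complex.exp ((π : ℂ) * I * (⟪θ + γh, θt⟫ : ℂ)))
      = ((((Real.sqrt (R.card : ℝ))⁻¹ : ℝ)) : ℂ) * ((volume F).toReal : ℂ) *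
        ∑ γ' ∈ R, (f γ' θ) * Complex.exp (-2 * (π : ℂ) * I * (⟪γh, γ'⟫ : ℂ)) := by
  classical
  haveI : Countable Λ := wgz_countable Λ bE hΛ
  haveI : Countable Λd := by
    rw [← (Equiv.ofBijective _ (wgz_equiv_bij bE Λd
      (wgz_mem_dual_iff Λ Λd bE hΛ hΛd))).countable_iff]
    infer_instance
  set c : ℂ := ((((Real.sqrt (R.card : ℝ))⁻¹ : ℝ)) : ℂ) with hc
  set A : Λd → ℂ := fun l => ∑ γ' ∈ R, (f γ' ((θ - γh) + (l : EN n))) *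
      Complex.exp (-2 * (π:ℂ) * I * (⟪(l : EN n), γ'⟫ : ℂ)) with hA
  set u : Λd → EN n → ℂ := fun l θt => A l *
      Complex.exp (2 * (π:ℂ) * I * ((⟪γh - (l : EN n), θt⟫ : ℝ) : ℂ)) with hu
  -- summability of the norms
  have hsummand : ∀ γ' ∈ R, Summable (fun l : Λd =>
      ‖(f γ' ((θ - γh) + (l : EN n))) *
        Complex.exp (-2 * (π:ℂ) * I * (⟪(l : EN n), γ'⟫ : ℂ))‖) := by
    intro γ' _
    apply ((wgz_summable bE Λd (wgz_mem_dual_iff Λ Λd bE hΛ hΛd) (f γ') (θ - γh)).congr)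
    intro l
    rw [norm_mul, wgz_norm_exp_I _ (by simp), mul_one]
  have hAnorm : Summable (fun l : Λd => ‖A l‖) := by
    apply Summable.of_nonneg_of_le (fun l => norm_nonneg _) (fun l => norm_sum_le R _)
    exact summable_sum (fun γ' hγ' => hsummand γ' hγ')
  -- Step (i): pointwise identity for the integrand
  have hpoint : ∀ θt : EN n, WGZ Λd R (fun γ' => ⇑(f γ')) (θ - γh) θt *
      Complex.exp ((π : ℂ) * I * (⟪θ + γh, θt⟫ : ℂ)) = c * ∑' l : Λd, u l θt := by
    intro θt
    set t : EN n → Λd → ℂ := fun γ' l => (f γ' ((θ - γh) + (l : EN n))) *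
        Complex.exp (-2 * (π:ℂ) * I * (⟪(l : EN n), θt⟫ : ℂ)) *
        Complex.exp (-2 * (π:ℂ) * I * (⟪(l : EN n), γ'⟫ : ℂ)) with ht
    have hts : ∀ γ' ∈ R, Summable (t γ') := by
      intro γ' hγ'
      apply Summable.of_norm
      apply (hsummand γ' hγ').congr
      intro l
      rw [ht]
      simp only
      rw [norm_mul, norm_mul, norm_mul, wgz_norm_exp_I
        (-2 * (π:ℂ) * I * (⟪(l : EN n), θt⟫ : ℂ)) (by simp)]
      ring
    have hswap : (∑ γ' ∈ R, ∑' l : Λd, t γ' l) = ∑' l : Λd, ∑ γ' ∈ R, t γ' l :=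
      (Summable.tsum_finsetSum hts).symm
    rw [WGZ]
    rw [show (∑ γ' ∈ R, ∑' l : Λd, (fun γ'' => ⇑(f γ'')) γ' ((θ - γh) + (l : EN n)) *
      Complex.exp (-2 * (π:ℂ) * I * (⟪(l : EN n), θt⟫ : ℂ)) *
      Complex.exp (-2 * (π:ℂ) * I * (⟪(l : EN n), γ'⟫ : ℂ))) = ∑' l : Λd, ∑ γ' ∈ R, t γ' l
      from hswap]
    rw [show ((((Real.sqrt (R.card : ℝ))⁻¹ : ℝ)) : ℂ) *
        Complex.exp (-(π:ℂ) * I * (⟪θ - γh, θt⟫ : ℂ)) * (∑' l : Λd, ∑ γ' ∈ R, t γ' l) *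
        Complex.exp ((π : ℂ) * I * (⟪θ + γh, θt⟫ : ℂ))
      = c * ((∑' l : Λd, ∑ γ' ∈ R, t γ' l) *
        (Complex.exp (-(π:ℂ) * I * (⟪θ - γh, θt⟫ : ℂ)) *
         Complex.exp ((π : ℂ) * I * (⟪θ + γh, θt⟫ : ℂ)))) from by rw [hc]; ring]
    congr 1
    rw [← tsum_mul_right]
    apply tsum_congr
    intro l
    rw [hu]
    simp only
    have hr : ⟪θ + γh, θt⟫ - ⟪θ - γh, θt⟫ - 2 * ⟪(l : EN n), θt⟫
        = 2 * ⟪γh - (l : EN n), θt⟫ := by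
      simp only [inner_add_left, inner_sub_left]
      ring
    have hC : ((⟪θ + γh, θt⟫ : ℝ) : ℂ) - ((⟪θ - γh, θt⟫ : ℝ) : ℂ)
        - 2 * ((⟪(l : EN n), θt⟫ : ℝ) : ℂ) = 2 * ((⟪γh - (l : EN n), θt⟫ : ℝ) : ℂ) := by
      exact_mod_cast congrArg Complex.ofReal hr
    have hexp : Complex.exp (-2 * (π:ℂ) * I * (⟪(l : EN n), θt⟫ : ℂ)) *
        (Complex.exp (-(π:ℂ) * I * (⟪θ - γh, θt⟫ : ℂ)) *
         Complex.exp ((π : ℂ) * I * (⟪θ + γh, θt⟫ : ℂ)))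
        = Complex.exp (2 * (π:ℂ) * I * ((⟪γh - (l : EN n), θt⟫ : ℝ) : ℂ)) := by
      rw [← Complex.exp_add, ← Complex.exp_add]
      congr 1
      linear_combination (π : ℂ) * I * hC
    calc (∑ γ' ∈ R, t γ' l) * (Complex.exp (-(π:ℂ) * I * (⟪θ - γh, θt⟫ : ℂ)) *
         Complex.exp ((π : ℂ) * I * (⟪θ + γh, θt⟫ : ℂ)))
        = A l * (Complex.exp (-2 * (π:ℂ) * I * (⟪(l : EN n), θt⟫ : ℂ)) *
          (Complex.exp (-(π:ℂ) * I * (⟪θ - γh, θt⟫ : ℂ)) *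
           Complex.exp ((π : ℂ) * I * (⟪θ + γh, θt⟫ : ℂ)))) := by
          rw [hA]
          simp only
          rw [Finset.sum_mul, Finset.sum_mul]
          apply Finset.sum_congr rfl
          intro γ' _
          rw [ht]
          simp only
          ring
      _ = A l * Complex.exp (2 * (π:ℂ) * I * ((⟪γh - (l : EN n), θt⟫ : ℝ) : ℂ)) := by
          rw [hexp]
  -- Step (ii): measurability and interchange
  have hcont : ∀ l : Λd, Continuous (u l) := by
    intro l
    apply Continuous.mul continuous_const
    apply Complex.continuous_exp.comp
    apply Continuous.mul continuous_const
    exact Complex.continuous_ofReal.comp (Continuous.inner continuous_const continuous_id)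
  have hnnorm_u : ∀ (l : Λd) (θt : EN n), ‖u l θt‖₊ = ‖A l‖₊ := by
    intro l θt
    apply NNReal.coe_injective
    simp only [coe_nnnorm]
    rw [hu]
    simp only
    rw [norm_mul, wgz_norm_exp_I _ (by simp), mul_one]
  have hlint : ∀ l : Λd, (∫⁻ θt in F, ‖u l θt‖₊ ∂volume) = ‖A l‖₊ * volume F := by
    intro l
    have : (fun θt => (‖u l θt‖₊ : ℝ≥0∞)) = fun _ => (‖A l‖₊ : ℝ≥0∞) :=
      funext fun θt => by rw [hnnorm_u l θt]
    rw [this, setLIntegral_const]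
  have hAnnorm : Summable (fun l : Λd => ‖A l‖₊) := by
    apply NNReal.summable_coe.mp
    simpa [coe_nnnorm] using hAnorm
  have htenn : (∑' l : Λd, ∫⁻ θt in F, ‖u l θt‖₊ ∂volume) ≠ ⊤ := by
    rw [tsum_congr hlint, ENNReal.tsum_mul_right]
    exact ENNReal.mul_ne_top (ENNReal.tsum_coe_ne_top_iff_summable.mpr hAnnorm) hvol
  have hswap2 : (∫ θt in F, ∑' l : Λd, u l θt) = ∑' l : Λd, ∫ θt in F, u l θt :=
    integral_tsum (fun l => ((hcont l).aestronglyMeasurable).restrict) htenn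
  -- Step (iii): evaluate each integral
  set l₀ : Λd := ⟨γh, hγh⟩ with hl₀
  have hval : ∀ l : Λd, (∫ θt in F, u l θt)
      = if l = l₀ then A l₀ * ((volume F).toReal : ℂ) else 0 := by
    intro l
    rw [hu]
    simp only
    rw [integral_const_mul]
    by_cases hl : l = l₀
    · subst hl
      rw [if_pos rfl]
      congr 1
      have hz : ∀ θt : EN n, (⟪γh - ((l₀ : Λd) : EN n), θt⟫ : ℝ) = 0 := by
        intro θt
        rw [show γh - ((l₀ : Λd) : EN n) = 0 from by rw [hl₀]; exact sub_self γh]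
        exact inner_zero_left θt
      have : (fun θt => Complex.exp (2 * (π:ℂ) * I * ((⟪γh - ((l₀ : Λd) : EN n), θt⟫ : ℝ) : ℂ)))
          = fun _ : EN n => (1 : ℂ) := by
        funext θt
        rw [hz θt]
        simp
      rw [this, setIntegral_const]
      simp
      rfl
    · rw [if_neg hl]
      have h1 : γh - (l : EN n) ∈ Λd := sub_mem hγh l.2
      have h2 : γh - (l : EN n) ≠ 0 := by
        intro hcontra
        exact hl (Subtype.ext (sub_eq_zero.mp hcontra).symm)
      have h3 : ∀ lΛ ∈ Λ, ∃ m : ℤ, ⟪γh - (l : EN n), lΛ⟫ = (m : ℝ) := by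
        intro lΛ hlΛ
        obtain ⟨m, hm⟩ := (hΛd _).mp h1 lΛ hlΛ
        exact ⟨m, by rw [real_inner_comm]; exact hm⟩
      rw [wgz_integral_char Λ F hFmeas hF ‹Countable Λ› _ h3 h2, mul_zero]
  -- assemble
  have hθ : θ - γh + γh = θ := by abel
  have hAl₀ : A l₀ = ∑ γ' ∈ R, (f γ' θ) *
      Complex.exp (-2 * (π : ℂ) * I * (⟪γh, γ'⟫ : ℂ)) := by
    rw [hA]
    simp only
    apply Finset.sum_congr rfl
    intro γ' _
    rw [hθ]
  calc (∫ θt in F, WGZ Λd R (fun γ' => ⇑(f γ')) (θ - γh) θt *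
        Complex.exp ((π : ℂ) * I * (⟪θ + γh, θt⟫ : ℂ)))
      = ∫ θt in F, c * ∑' l : Λd, u l θt := by
        apply setIntegral_congr_fun hFmeas
        intro θt _
        exact hpoint θt
    _ = c * ∑' l : Λd, ∫ θt in F, u l θt := by rw [integral_const_mul, hswap2]
    _ = c * (A l₀ * ((volume F).toReal : ℂ)) := by
        rw [tsum_congr hval, tsum_ite_eq l₀ (fun _ => A l₀ * ((volume F).toReal : ℂ))]
    _ = c * ((volume F).toReal : ℂ) * ∑ γ' ∈ R, (f γ' θ) *
        Complex.exp (-2 * (π : ℂ) * I * (⟪γh, γ'⟫ : ℂ)) := by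
        rw [hAl₀]
        ring
end Main

/-- `Z⁻¹` is a left inverse of the Weil–Gel'fand–Zak transform: for a
family `f = (f_γ)` of Schwartz functions indexed by `γ ∈ Λ*` (Λ-periodically), every
`θ ∈ E` and every `γ ∈ Λ*`, one has `Z⁻¹(Z(f))(θ,γ) = f_γ(θ)`. -/
theorem wgz_left_inverse
    (n : ℕ) (Λ Λd : AddSubgroup (EN n))
    (bE : Module.Basis (Fin n) ℝ (EN n))
    (hΛ : ∀ x, x ∈ Λ ↔ ∃ c : Fin n → ℤ, x = ∑ i, (c i : ℝ) • bE i)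
    (hint : ∀ x ∈ Λ, ∀ y ∈ Λ, ∃ m : ℤ, ⟪x, y⟫ = (m : ℝ))
    (hΛd : ∀ γ, γ ∈ Λd ↔ ∀ l ∈ Λ, ∃ m : ℤ, ⟪l, γ⟫ = (m : ℝ))
    (R : Finset (EN n)) (hR : ∀ r ∈ R, r ∈ Λd)
    (hRrep : ∀ γ ∈ Λd, ∃! r, r ∈ R ∧ γ - r ∈ Λ)
    (F : Set (EN n)) (hFmeas : MeasurableSet F)
    (hF : ∀ x : EN n, ∃! l, l ∈ Λ ∧ x + l ∈ F)
    (f : EN n → SchwartzMap (EN n) ℂ)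
    (hper : ∀ γ : EN n, ∀ l ∈ Λ, f (γ + l) = f γ) :
    ∀ θ : EN n, ∀ γ ∈ Λd,
      WGZinv R F (WGZ Λd R (fun γ' => ⇑(f γ'))) θ γ = f γ θ := by
  classical
  intro θ γ hγ
  obtain ⟨hv0, hvtop⟩ := wgz_volume_facts Λ bE F hFmeas hF hΛ
  have hVne : (((volume F).toReal : ℝ) : ℂ) ≠ 0 := by
    simp only [ne_eq, Complex.ofReal_eq_zero]
    exact ENNReal.toReal_ne_zero.mpr ⟨hv0, hvtop⟩
  have hRne : R.Nonempty := by
    obtain ⟨r1, ⟨hr1R, _⟩, _⟩ := hRrep 0 (zero_mem Λd)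
    exact ⟨r1, hr1R⟩
  have hcardR : (0:ℝ) < R.card := by exact_mod_cast Finset.card_pos.mpr hRne
  have hccR : ((Real.sqrt (R.card:ℝ))⁻¹) * ((Real.sqrt (R.card:ℝ))⁻¹) = ((R.card:ℝ))⁻¹ := by
    rw [← mul_inv, Real.mul_self_sqrt hcardR.le]
  have hcc : (((Real.sqrt (R.card:ℝ))⁻¹ : ℝ) : ℂ) * (((Real.sqrt (R.card:ℝ))⁻¹ : ℝ) : ℂ) = (((R.card:ℝ)⁻¹ : ℝ) : ℂ) := by
    rw [← Complex.ofReal_mul, hccR]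
  rw [WGZinv]
  have hstep : ∀ γh ∈ R,
      Complex.exp (2 * (π : ℂ) * I * (⟪γ, γh⟫ : ℂ)) *
        (((volume F).toReal)⁻¹ *
          ∫ θt in F, WGZ Λd R (fun γ' => ⇑(f γ')) (θ - γh) θt *
            Complex.exp ((π : ℂ) * I * (⟪θ + γh, θt⟫ : ℂ)))
      = (((Real.sqrt (R.card:ℝ))⁻¹ : ℝ) : ℂ) * (Complex.exp (2 * (π : ℂ) * I * (⟪γ, γh⟫ : ℂ)) *
        ∑ γ' ∈ R, (f γ' θ) * Complex.exp (-2 * (π : ℂ) * I * (⟪γh, γ'⟫ : ℂ))) := by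
    intro γh hγh
    rw [wgz_inner_integral Λ Λd bE R F hΛ hΛd hFmeas hF hvtop f θ γh (hR γh hγh)]
    push_cast
    field_simp
  rw [Finset.sum_congr rfl hstep, ← Finset.mul_sum]
  have hE : ∀ γh ∈ R, Complex.exp (2 * (π : ℂ) * I * (⟪γ, γh⟫ : ℂ)) *
      (∑ γ' ∈ R, (f γ' θ) * Complex.exp (-2 * (π : ℂ) * I * (⟪γh, γ'⟫ : ℂ)))
      = ∑ γ' ∈ R, (f γ' θ) * Complex.exp (2 * (π : ℂ) * I * ((⟪γ - γ', γh⟫ : ℝ) : ℂ)) := by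
    intro γh hγh
    rw [Finset.mul_sum]
    apply Finset.sum_congr rfl
    intro γ' _
    have hr : ⟪γ, γh⟫ - ⟪γh, γ'⟫ = ⟪γ - γ', γh⟫ := by
      rw [inner_sub_left, real_inner_comm γh γ']
    have hC : ((⟪γ, γh⟫ : ℝ) : ℂ) - ((⟪γh, γ'⟫ : ℝ) : ℂ) = ((⟪γ - γ', γh⟫ : ℝ) : ℂ) := by
      exact_mod_cast congrArg Complex.ofReal hr
    rw [show Complex.exp (2 * (π : ℂ) * I * (⟪γ, γh⟫ : ℂ)) *
        ((f γ' θ) * Complex.exp (-2 * (π : ℂ) * I * (⟪γh, γ'⟫ : ℂ)))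
      = (f γ' θ) * (Complex.exp (2 * (π : ℂ) * I * (⟪γ, γh⟫ : ℂ)) *
        Complex.exp (-2 * (π : ℂ) * I * (⟪γh, γ'⟫ : ℂ))) from by ring]
    congr 1
    rw [← Complex.exp_add]
    congr 1
    linear_combination 2 * (π : ℂ) * I * hC
  rw [Finset.sum_congr rfl hE, Finset.sum_comm]
  have hinner : ∀ γ' ∈ R,
      (∑ γh ∈ R, (f γ' θ) * Complex.exp (2 * (π : ℂ) * I * ((⟪γ - γ', γh⟫ : ℝ) : ℂ)))
      = (f γ' θ) * (if γ - γ' ∈ Λ then ((R.card : ℕ) : ℂ) else 0) := by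
    intro γ' hγ'
    rw [← Finset.mul_sum]
    congr 1
    by_cases hmem : γ - γ' ∈ Λ
    · rw [if_pos hmem]
      have hone : ∀ γh ∈ R, Complex.exp (2 * (π : ℂ) * I * ((⟪γ - γ', γh⟫ : ℝ) : ℂ)) = 1 := by
        intro γh hγh
        obtain ⟨m, hm⟩ := (hΛd γh).mp (hR γh hγh) (γ - γ') hmem
        rw [hm]
        push_cast
        exact wgz_exp_int m
      rw [Finset.sum_congr rfl hone, Finset.sum_const, nsmul_eq_mul, mul_one]
    · rw [if_neg hmem]
      have hμd : γ - γ' ∈ Λd := sub_mem hγ (hR γ' hγ')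
      have hμint : ∀ l ∈ Λ, ∃ m : ℤ, ⟪γ - γ', l⟫ = (m : ℝ) := by
        intro l hl
        obtain ⟨m, hm⟩ := (hΛd (γ - γ')).mp hμd l hl
        exact ⟨m, by rw [real_inner_comm]; exact hm⟩
      obtain ⟨ν, hνd, hνni⟩ := wgz_exists_nu Λ Λd bE hΛ hΛd (γ - γ') hmem
      exact wgz_char_sum Λ Λd R hR hRrep (γ - γ') hμint ν hνd hνni
  rw [Finset.sum_congr rfl hinner]
  obtain ⟨r₀, ⟨hr₀R, hr₀Λ⟩, hr₀u⟩ := hRrep γ hγ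
  have hsum : (∑ γ' ∈ R, (f γ' θ) * (if γ - γ' ∈ Λ then ((R.card : ℕ) : ℂ) else 0))
      = (f γ θ) * ((R.card : ℕ) : ℂ) := by
    rw [Finset.sum_eq_single_of_mem r₀ hr₀R]
    · rw [if_pos hr₀Λ]
      congr 2
      have := hper r₀ (γ - r₀) hr₀Λ
      rw [show r₀ + (γ - r₀) = γ from by abel] at this
      rw [this]
    · intro γ' hγ'R hne
      rw [if_neg, mul_zero]
      intro hmem
      exact hne (hr₀u γ' ⟨hγ'R, hmem⟩)
  rw [hsum]
  rw [show (((Real.sqrt (R.card:ℝ))⁻¹ : ℝ) : ℂ) * ((((Real.sqrt (R.card:ℝ))⁻¹ : ℝ) : ℂ) * ((f γ θ) * ((R.card : ℕ) : ℂ)))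
    = ((((Real.sqrt (R.card:ℝ))⁻¹ : ℝ) : ℂ) * (((Real.sqrt (R.card:ℝ))⁻¹ : ℝ) : ℂ)) * ((f γ θ) * ((R.card : ℕ) : ℂ)) from by ring, hcc]
  have hcne : ((R.card : ℕ) : ℂ) ≠ 0 :=
    Nat.cast_ne_zero.mpr (Finset.card_pos.mpr hRne).ne'
  push_cast
  field_simp


end
end

section
/- Let A be a complex unital Banach algebra, x, y, z ∈ A and a ∈ ℂ with a ≠ 0, such that xy − yx = z and yz − zy = a·z. Then x·exp(y) − exp(y)·x = a⁻¹ · z · (exp(y + a·1) − exp(y)), where exp is the exponential series in A and 1 is the unit of A. -/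
open NormedSpace

lemma aux_pow_comm {A : Type*} [NormedRing A] [NormedAlgebra ℂ A]
    (y z : A) (a : ℂ) (h2 : y * z - z * y = a • z) :
    ∀ n : ℕ, y ^ n * z = z * (y + a • (1 : A)) ^ n := by
  have hyz : y * z = z * (y + a • (1 : A)) := by
    have h : y * z = z * y + a • z := by
      rw [← h2]; noncomm_ring
    rw [h, mul_add, mul_smul_comm, mul_one]
  intro n
  induction n with
  | zero => simp
  | succ n ih =>
    rw [pow_succ, pow_succ, mul_assoc, hyz, ← mul_assoc, ih, mul_assoc]

lemma aux_comm_pow {A : Type*} [NormedRing A] [NormedAlgebra ℂ A]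
    (x y z : A) (a : ℂ)
    (h1 : x * y - y * x = z) (h2 : y * z - z * y = a • z) :
    ∀ n : ℕ, a • (x * y ^ n - y ^ n * x) = z * ((y + a • (1 : A)) ^ n - y ^ n) := by
  intro n
  induction n with
  | zero => simp
  | succ n ih =>
    have hz : y ^ n * z = z * (y + a • (1 : A)) ^ n := aux_pow_comm y z a h2 n
    have e1 : x * y ^ (n + 1) - y ^ (n + 1) * x
        = (x * y ^ n - y ^ n * x) * y + y ^ n * (x * y - y * x) := by
      rw [pow_succ]; noncomm_ring
    rw [e1, h1, smul_add, ← smul_mul_assoc, ih, hz, pow_succ, pow_succ]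
    have e2 : z * ((y + a • (1 : A)) ^ n * (y + a • (1 : A)))
        = z * ((y + a • (1 : A)) ^ n * y) + a • (z * (y + a • (1 : A)) ^ n) := by
      rw [mul_add, mul_smul_comm, mul_one, mul_add, mul_smul_comm]
    have e3 : z * ((y + a • (1 : A)) ^ n * (y + a • (1 : A)) - y ^ n * y)
        = z * ((y + a • (1 : A)) ^ n * y) + a • (z * (y + a • (1 : A)) ^ n)
          - z * (y ^ n * y) := by
      rw [mul_sub, e2]
    rw [e3, mul_sub z ((y + a • (1 : A)) ^ n), sub_mul, mul_assoc, mul_assoc]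
    abel

/-- let `A` be a complex unital Banach algebra, `x, y, z ∈ A` and
`a ∈ ℂ` with `a ≠ 0`, such that `xy − yx = z` and `yz − zy = a·z`. Then
`x·exp(y) − exp(y)·x = a⁻¹ · z · (exp(y + a·1) − exp(y))`. -/
theorem commutator_with_exp
    {A : Type*} [NormedRing A] [NormedAlgebra ℂ A] [CompleteSpace A]
    (x y z : A) (a : ℂ) (ha : a ≠ 0)
    (h1 : x * y - y * x = z) (h2 : y * z - z * y = a • z) :
    x * NormedSpace.exp y - NormedSpace.exp y * x =
      a⁻¹ • (z * (NormedSpace.exp (y + a • (1 : A)) - NormedSpace.exp y)) := by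
  set w := y + a • (1 : A) with hw
  have key : ∀ n : ℕ, x * y ^ n - y ^ n * x = a⁻¹ • (z * (w ^ n - y ^ n)) := by
    intro n
    rw [← aux_comm_pow x y z a h1 h2 n, inv_smul_smul₀ ha]
  have hsy : Summable fun n : ℕ => ((n.factorial : ℂ)⁻¹) • y ^ n := expSeries_summable' y
  have hsw : Summable fun n : ℕ => ((n.factorial : ℂ)⁻¹) • w ^ n := expSeries_summable' w
  have hey : exp y = ∑' n : ℕ, ((n.factorial : ℂ)⁻¹) • y ^ n := by rw [exp_eq_tsum (𝕂 := ℂ)]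
  have hew : exp w = ∑' n : ℕ, ((n.factorial : ℂ)⁻¹) • w ^ n := by rw [exp_eq_tsum (𝕂 := ℂ)]
  rw [hey, hew]
  rw [← hsy.tsum_mul_left x, ← hsy.tsum_mul_right x,
    ← Summable.tsum_sub (hsy.mul_left x) (hsy.mul_right x)]
  have hpt : ∀ n : ℕ, x * (((n.factorial : ℂ)⁻¹) • y ^ n) - (((n.factorial : ℂ)⁻¹) • y ^ n) * x
      = a⁻¹ • (z * (((n.factorial : ℂ)⁻¹) • w ^ n)) - a⁻¹ • (z * (((n.factorial : ℂ)⁻¹) • y ^ n)) := by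
    intro n
    rw [mul_smul_comm, smul_mul_assoc, ← smul_sub, key n, mul_sub,
      mul_smul_comm, mul_smul_comm]
    module
  rw [tsum_congr hpt]
  have hszw : Summable fun n : ℕ => a⁻¹ • (z * (((n.factorial : ℂ)⁻¹) • w ^ n)) :=
    ((hsw.mul_left z).const_smul a⁻¹)
  have hszy : Summable fun n : ℕ => a⁻¹ • (z * (((n.factorial : ℂ)⁻¹) • y ^ n)) :=
    ((hsy.mul_left z).const_smul a⁻¹)
  rw [Summable.tsum_sub hszw hszy, mul_sub, smul_sub]
  congr 1
  · rw [Summable.tsum_const_smul a⁻¹ (hsw.mul_left z), (hsw).tsum_mul_left z]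
  · rw [Summable.tsum_const_smul a⁻¹ (hsy.mul_left z), (hsy).tsum_mul_left z]
end
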